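/- Let K be a field with |K| ≥ r+2, let r ≤ m ≤ n, let G be the m×n matrix with identity block I_r in the top-left corner and zeros elsewhere, and let V be a linear subspace of K^{m×n} such that every matrix in G + V has rank at most r. Then every v ∈ V satisfies v_{i,j} = 0 for all i > r and j > r. -/

import Mathlib

open Polynomial Matrix

lemma rank_submatrix_le' {K : Type*} [Field K] {m n a b : ℕ}
    (f : Fin a → Fin m) (g : Fin b → Fin n) (A : Matrix (Fin m) (Fin n) K) :
    (A.submatrix f g).rank ≤ A.rank := by
  have h1 : A.submatrix f id =
      ((1 : Matrix (Fin m) (Fin m) K).submatrix f (Equiv.refl (Fin m))) * A := by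
    rw [Matrix.one_submatrix_mul]
    rfl
  have h2 : A.submatrix f g = (A.submatrix f id) *
      ((1 : Matrix (Fin n) (Fin n) K).submatrix (Equiv.refl (Fin n)) g) := by
    rw [Matrix.mul_submatrix_one, Matrix.submatrix_submatrix]
    rfl
  calc (A.submatrix f g).rank
      ≤ (A.submatrix f id).rank := by rw [h2]; exact Matrix.rank_mul_le_left _ _
    _ ≤ A.rank := by rw [h1]; exact Matrix.rank_mul_le_right _ _

theorem stmt2 (K : Type*) [Field K] (m n r : ℕ)
    (hK : (r + 2 : Cardinal) ≤ Cardinal.mk K)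
    (hrm : r ≤ m) (hmn : m ≤ n)
    (G : Matrix (Fin m) (Fin n) K)
    (hG : ∀ i j, G i j = if (i : ℕ) = (j : ℕ) ∧ (i : ℕ) < r then 1 else 0)
    (V : Submodule K (Matrix (Fin m) (Fin n) K))
    (hrank : ∀ v ∈ V, (G + v).rank ≤ r) :
    ∀ v ∈ V, ∀ (i : Fin m) (j : Fin n), r ≤ (i : ℕ) → r ≤ (j : ℕ) → v i j = 0 := by
  intro v hv i j hi hj
  classical
  set row : Fin (r + 1) → Fin m := fun a => if h : (a : ℕ) < r then ⟨a, h.trans_le hrm⟩ else i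
    with hrow
  set col : Fin (r + 1) → Fin n := fun b =>
    if h : (b : ℕ) < r then ⟨b, h.trans_le (hrm.trans hmn)⟩ else j with hcol
  -- values of G on the submatrix
  have hval_row : ∀ a : Fin (r + 1), ((row a : Fin m) : ℕ) =
      if (a : ℕ) < r then (a : ℕ) else (i : ℕ) := by
    intro a; by_cases h : (a : ℕ) < r <;> simp [hrow, h]
  have hval_col : ∀ b : Fin (r + 1), ((col b : Fin n) : ℕ) =
      if (b : ℕ) < r then (b : ℕ) else (j : ℕ) := by
    intro b; by_cases h : (b : ℕ) < r <;> simp [hcol, h]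
  have hGsub : ∀ a b : Fin (r + 1),
      G (row a) (col b) = if (a : ℕ) = (b : ℕ) ∧ (a : ℕ) < r then 1 else 0 := by
    intro a b
    rw [hG]
    have h1 : ((((row a) : Fin m) : ℕ) = (((col b) : Fin n) : ℕ) ∧ (((row a) : Fin m) : ℕ) < r)
        ↔ ((a : ℕ) = (b : ℕ) ∧ (a : ℕ) < r) := by
      rw [hval_row, hval_col]
      have ha' := a.isLt
      have hb' := b.isLt
      split_ifs <;> omega
    simp only [h1]
  have hrowlast : row (Fin.last r) = i := by
    simp [hrow, Fin.val_last]
  have hcollast : col (Fin.last r) = j := by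
    simp [hcol, Fin.val_last]
  -- the polynomial matrix
  set M : Matrix (Fin (r + 1)) (Fin (r + 1)) K[X] :=
    fun a b => C (G (row a) (col b)) + X * C (v (row a) (col b)) with hM
  set p : K[X] := M.det with hp
  -- every evaluation vanishes
  have heval : ∀ t : K, p.eval t = 0 := by
    intro t
    have hmem : t • v ∈ V := V.smul_mem t hv
    have hr : (G + t • v).rank ≤ r := hrank _ hmem
    have hsub : ((G + t • v).submatrix row col).rank ≤ r :=
      le_trans (rank_submatrix_le' row col _) hr
    have hmap : M.map (eval t) = (G + t • v).submatrix row col := by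
      ext a b
      simp only [Matrix.map_apply, hM, eval_add, eval_mul, eval_X, eval_C,
        Matrix.submatrix_apply, Matrix.add_apply, Matrix.smul_apply, smul_eq_mul]
      simp [Matrix.map]
      ring
    have hpe : p.eval t = ((G + t • v).submatrix row col).det := by
      have := RingHom.map_det (Polynomial.evalRingHom t) M
      simpa [hmap] using this
    rw [hpe]
    by_contra hdet
    have hunit : IsUnit ((G + t • v).submatrix row col) :=
      (Matrix.isUnit_iff_isUnit_det _).mpr (Ne.isUnit hdet)
    have := Matrix.rank_of_isUnit _ hunit
    rw [Fintype.card_fin] at this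
    omega
  -- factor out X from the last column
  set w : Fin (r + 1) → K[X] := fun a => C (v (row a) j) with hw
  have hMlast : ∀ a, M a (Fin.last r) = (((X : K[X])) • w) a := by
    intro a
    have hz : G (row a) j = 0 := by
      have h := hGsub a (Fin.last r)
      rw [hcollast] at h
      rw [h, if_neg]
      simp only [Fin.val_last]
      omega
    simp only [hM, hcollast, hz, hw, Pi.smul_apply, smul_eq_mul, map_zero, zero_add]
  set N : Matrix (Fin (r + 1)) (Fin (r + 1)) K[X] := M.updateCol (Fin.last r) w with hN
  set q : K[X] := N.det with hq
  have hfactor : p = X * q := by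
    have h1 : M = M.updateCol (Fin.last r) ((X : K[X]) • w) := by
      ext a b
      by_cases hb : b = Fin.last r
      · subst hb; rw [Matrix.updateCol_self, hMlast]
      · rw [Matrix.updateCol_ne hb]
    rw [hp, hq, hN]
    conv_lhs => rw [h1]
    exact Matrix.det_updateCol_smul M (Fin.last r) (X : K[X]) w
  -- degree bound on q
  have hqdeg : q.natDegree ≤ r := by
    rw [hq, Matrix.det_apply']
    apply Polynomial.natDegree_sum_le_of_forall_le
    intro σ _
    refine le_trans (Polynomial.natDegree_mul_le) ?_
    rw [Polynomial.natDegree_intCast, zero_add]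
    refine le_trans (Polynomial.natDegree_prod_le _ _) ?_
    have hbound : ∀ b : Fin (r + 1),
        (N (σ b) b).natDegree ≤ if b = Fin.last r then 0 else 1 := by
      intro b
      by_cases hb : b = Fin.last r
      · subst hb
        simp [hN, hw, Matrix.updateCol_self]
      · rw [if_neg hb, hN, Matrix.updateCol_ne hb, hM]
        refine le_trans (Polynomial.natDegree_add_le _ _) ?_
        simp only [Polynomial.natDegree_C, max_le_iff]
        refine ⟨Nat.zero_le _, ?_⟩
        refine le_trans (Polynomial.natDegree_mul_le) ?_
        simp
    refine le_trans (Finset.sum_le_sum fun b _ => hbound b) ?_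
    rw [Fin.sum_univ_castSucc]
    simp only [if_pos rfl, add_zero]
    have : ∀ b : Fin r, (if (Fin.castSucc b) = Fin.last r then 0 else 1) = 1 := by
      intro b
      rw [if_neg]
      exact (Fin.castSucc_lt_last b).ne
    rw [Finset.sum_congr rfl fun b _ => this b]
    simp
  -- p is zero
  have hpz : p = 0 := by
    apply Polynomial.eq_zero_of_forall_eval_zero_of_natDegree_lt_card _ heval
    have hpdeg : p.natDegree ≤ r + 1 := by
      rw [hfactor]
      refine le_trans (Polynomial.natDegree_mul_le) ?_
      rw [Polynomial.natDegree_X]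
      omega
    calc (p.natDegree : Cardinal) ≤ ((r + 1 : ℕ) : Cardinal) := by
          exact_mod_cast hpdeg
      _ < ((r + 2 : ℕ) : Cardinal) := by exact_mod_cast Nat.lt_succ_self (r + 1)
      _ ≤ Cardinal.mk K := by
          have : ((r + 2 : ℕ) : Cardinal) = (r + 2 : Cardinal) := by push_cast; ring
          rw [this]; exact hK
  -- compute coeff 1 of p
  have hc1 : p.coeff 1 = q.coeff 0 := by
    rw [hfactor, Polynomial.coeff_X_mul]
  have hq0 : q.coeff 0 = v i j := by
    rw [Polynomial.coeff_zero_eq_eval_zero]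
    have hmap : q.eval 0 = (N.map (eval (0 : K))).det := by
      have := RingHom.map_det (Polynomial.evalRingHom (0 : K)) N
      simpa using this
    rw [hmap]
    set A : Matrix (Fin (r + 1)) (Fin (r + 1)) K := N.map (eval (0 : K)) with hA
    have hAval : ∀ a b, A a b =
        if b = Fin.last r then v (row a) j else G (row a) (col b) := by
      intro a b
      by_cases hb : b = Fin.last r
      · subst hb
        simp [hA, hN, hw, Matrix.map_apply, Matrix.updateCol_self]
      · rw [hA, Matrix.map_apply, hN, Matrix.updateCol_ne hb, if_neg hb, hM]
        simp
    have htri : A.BlockTriangular id := by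
      intro a b hab
      have hb : b ≠ Fin.last r := by
        intro hbe
        subst hbe
        exact absurd hab (not_lt.mpr (Fin.le_last a))
      rw [hAval, if_neg hb, hGsub, if_neg]
      have : (b : ℕ) < (a : ℕ) := hab
      omega
    rw [Matrix.det_of_upperTriangular htri]
    have hdiag : ∀ a : Fin (r + 1), A a a =
        if a = Fin.last r then v i j else 1 := by
      intro a
      by_cases ha : a = Fin.last r
      · subst ha
        rw [hAval, if_pos rfl, if_pos rfl, hrowlast]
      · have halt : (a : ℕ) < r := by
          have := Fin.lt_last_iff_ne_last.mpr ha
          exact this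
        rw [hAval, if_neg ha, hGsub, if_pos ⟨rfl, halt⟩, if_neg ha]
    rw [Finset.prod_congr rfl fun a _ => hdiag a]
    rw [Fin.prod_univ_castSucc]
    simp only [if_pos rfl]
    have : ∀ a : Fin r, (if (Fin.castSucc a) = Fin.last r then v i j else 1) = 1 := by
      intro a
      rw [if_neg (Fin.castSucc_lt_last a).ne]
    rw [Finset.prod_congr rfl fun a _ => this a]
    simp
  rw [hpz] at hc1
  simp only [Polynomial.coeff_zero] at hc1
  rw [hq0] at hc1
  exact hc1.symm
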